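/- For every integer k ≥ 2, the Gallai-Ramsey number of the wheel W_5 satisfies gr_k(K_3 : W_5) ≥ 14·5^{(k−2)/2} + 1 if k is even, and gr_k(K_3 : W_5) ≥ 28·5^{(k−3)/2} + 1 if k is odd; that is, there exists a k-coloring of the edges of the complete graph on 14·5^{(k−2)/2} vertices (k even), respectively 28·5^{(k−3)/2} vertices (k odd), containing no rainbow triangle and no monochromatic copy of W_5. -/

import Mathlib

open SimpleGraph

/-- The cone over a graph: join of `K₁` with `G`. The new vertex `none` is
adjacent to every vertex of `G`. -/
def coneGraph {V : Type*} (G : SimpleGraph V) : SimpleGraph (Option V) where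
  Adj u v :=
    (u = none ∧ v ≠ none) ∨ (u ≠ none ∧ v = none) ∨
      (∃ a b, u = some a ∧ v = some b ∧ G.Adj a b)
  symm := by
    refine ⟨?_⟩
    rintro u v (⟨h1, h2⟩ | ⟨h1, h2⟩ | ⟨a, b, h1, h2, h3⟩)
    · exact Or.inr (Or.inl ⟨h2, h1⟩)
    · exact Or.inl ⟨h2, h1⟩
    · exact Or.inr (Or.inr ⟨b, a, h2, h1, h3.symm⟩)
  loopless := by
    refine ⟨?_⟩
    rintro u (⟨h1, h2⟩ | ⟨h1, h2⟩ | ⟨a, b, h1, h2, h3⟩)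
    · exact h2 h1
    · exact h1 h2
    · subst h1
      rw [Option.some_inj] at h2
      subst h2
      exact G.loopless.irrefl a h3

/-- The wheel graph `W_{m+1}`: a hub joined to every vertex of the cycle `C_m`. -/
def wheelGraph (m : ℕ) : SimpleGraph (Option (Fin m)) :=
  coneGraph (cycleGraph m)

/-- The fan graph `F_m = K₁ ∨ P_m`. -/
def fanGraph (m : ℕ) : SimpleGraph (Option (Fin m)) :=
  coneGraph (pathGraph m)

/-- An edge-coloring `c` of the complete graph on `W` contains a monochromatic
copy of `H` in color `i`. -/
def HasMonoCopy {V W α : Type*} (c : Sym2 W → α) (H : SimpleGraph V) (i : α) : Prop :=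
  ∃ f : V ↪ W, ∀ u v : V, H.Adj u v → c s(f u, f v) = i

/-- An edge-coloring `c` of the complete graph on `W` contains a rainbow triangle. -/
def HasRainbowTriangle {W α : Type*} (c : Sym2 W → α) : Prop :=
  ∃ x y z : W, x ≠ y ∧ y ≠ z ∧ x ≠ z ∧
    c s(x, y) ≠ c s(y, z) ∧ c s(y, z) ≠ c s(x, z) ∧ c s(x, y) ≠ c s(x, z)

/-- An edge-coloring `c` of the complete graph on `W` contains a rainbow copy of `G`,
i.e. a copy of `G` all of whose edges receive pairwise distinct colors. -/
def HasRainbowCopy {V W α : Type*} (c : Sym2 W → α) (G : SimpleGraph V) : Prop :=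
  ∃ f : V ↪ W, ∀ u v x y : V, G.Adj u v → G.Adj x y →
    c s(f u, f v) = c s(f x, f y) → s(u, v) = s(x, y)

/-- The two-color Ramsey number `R(G, H)`. -/
noncomputable def ramseyNumber {V₁ V₂ : Type*} (G : SimpleGraph V₁) (H : SimpleGraph V₂) : ℕ :=
  sInf {n : ℕ | ∀ c : Sym2 (Fin n) → Fin 2, HasMonoCopy c G 0 ∨ HasMonoCopy c H 1}

/-- The `k`-color Ramsey number `R_k(H)`. -/
noncomputable def multicolorRamseyNumber {V : Type*} (k : ℕ) (H : SimpleGraph V) : ℕ :=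
  sInf {n : ℕ | ∀ c : Sym2 (Fin n) → Fin k, ∃ i, HasMonoCopy c H i}

/-- The Gallai-Ramsey number `gr_k(K₃ : H)`. -/
noncomputable def gallaiRamseyK3 {V : Type*} (k : ℕ) (H : SimpleGraph V) : ℕ :=
  sInf {n : ℕ | ∀ c : Sym2 (Fin n) → Fin k,
    HasRainbowTriangle c ∨ ∃ i, HasMonoCopy c H i}

/-- The general Gallai-Ramsey number `gr_k(G : H)`. -/
noncomputable def gallaiRamsey {V₁ V₂ : Type*} (k : ℕ) (G : SimpleGraph V₁)
    (H : SimpleGraph V₂) : ℕ :=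
  sInf {n : ℕ | ∀ c : Sym2 (Fin n) → Fin k,
    HasRainbowCopy c G ∨ ∃ i, HasMonoCopy c H i}

/-- tuple formulation of containing a monochromatic W5 -/
def W5Tuple {W α : Type*} (c : Sym2 W → α) (i : α) : Prop :=
  ∃ h a b d e : W, h ≠ a ∧ h ≠ b ∧ h ≠ d ∧ h ≠ e ∧ a ≠ b ∧ a ≠ d ∧ a ≠ e ∧
    b ≠ d ∧ b ≠ e ∧ d ≠ e ∧
    c s(h, a) = i ∧ c s(h, b) = i ∧ c s(h, d) = i ∧ c s(h, e) = i ∧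
    c s(a, b) = i ∧ c s(b, d) = i ∧ c s(d, e) = i ∧ c s(e, a) = i

lemma wheel_adj_hub (j : Fin 4) : (wheelGraph 4).Adj none (some j) :=
  Or.inl ⟨rfl, by simp⟩

lemma wheel_adj_rim {x y : Fin 4} (h : (cycleGraph 4).Adj x y) :
    (wheelGraph 4).Adj (some x) (some y) :=
  Or.inr (Or.inr ⟨x, y, rfl, rfl, h⟩)

lemma mono_iff_tuple {W α : Type*} (c : Sym2 W → α) (i : α) :
    HasMonoCopy c (wheelGraph 4) i ↔ W5Tuple c i := by
  constructor
  · rintro ⟨f, hf⟩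
    refine ⟨f none, f (some 0), f (some 1), f (some 2), f (some 3),
      ?_, ?_, ?_, ?_, ?_, ?_, ?_, ?_, ?_, ?_,
      hf _ _ (wheel_adj_hub 0), hf _ _ (wheel_adj_hub 1),
      hf _ _ (wheel_adj_hub 2), hf _ _ (wheel_adj_hub 3),
      hf _ _ (wheel_adj_rim (by decide)), hf _ _ (wheel_adj_rim (by decide)),
      hf _ _ (wheel_adj_rim (by decide)), hf _ _ (wheel_adj_rim (by decide))⟩ <;>
      exact fun hEq => absurd (f.injective hEq) (by decide)
  · rintro ⟨h, a, b, d, e, hha, hhb, hhd, hhe, hab, had, hae, hbd, hbe, hde,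
      cha, chb, chd, che, cab, cbd, cde, cea⟩
    classical
    set g : Option (Fin 4) → W := fun o => o.elim h ![a, b, d, e] with hg
    have hginj : Function.Injective g := by
      intro u v huv
      match u, v with
      | none, none => rfl
      | none, some j =>
        exfalso; revert huv; fin_cases j <;> simp [hg] <;> assumption
      | some j, none =>
        exfalso; revert huv; fin_cases j <;> simp [hg] <;> (intro hh; exact (by assumption : h ≠ _) hh.symm)
      | some j, some j' =>
        revert huv; fin_cases j <;> fin_cases j' <;> simp [hg] <;> intro hh <;>
          first
          | rfl
          | exact absurd hh (by assumption)
          | exact absurd hh.symm (by assumption)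
    refine ⟨⟨g, hginj⟩, ?_⟩
    rintro u v (⟨hu, hv⟩ | ⟨hu, hv⟩ | ⟨x, y, hu, hv, hxy⟩)
    · subst hu
      obtain ⟨j, rfl⟩ := Option.ne_none_iff_exists'.mp hv
      fin_cases j <;> simpa [hg] using (by assumption)
    · subst hv
      obtain ⟨j, rfl⟩ := Option.ne_none_iff_exists'.mp hu
      rw [Sym2.eq_swap]
      fin_cases j <;> simpa [hg] using (by assumption)
    · subst hu; subst hv
      simp only [Function.Embedding.coeFn_mk]
      revert hxy
      fin_cases x <;> fin_cases y <;> intro hxy <;>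
        first
        | exact absurd hxy (by decide)
        | (simp [hg]; first | assumption | (rw [Sym2.eq_swap]; assumption))

/-- color table: S = {1,2,6,8,12,13} ↦ 0 else 1 -/
def gtab : Fin 14 → Fin 2 := ![1, 0, 0, 1, 1, 1, 0, 1, 0, 1, 1, 1, 0, 0]

lemma gtab_comm : ∀ x y : Fin 14, gtab (x - y) = gtab (y - x) := by decide

def c14 : Sym2 (Fin 14) → Fin 2 := Sym2.lift ⟨fun x y => gtab (x - y), gtab_comm⟩

lemma c14_pair (x y : Fin 14) : c14 s(x, y) = gtab (x - y) := rfl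

lemma no_rainbow_two {W : Type*} (c : Sym2 W → Fin 2) : ¬ HasRainbowTriangle c := by
  rintro ⟨x, y, z, _, _, _, h1, h2, h3⟩
  revert h1 h2 h3
  generalize c s(x, y) = u; generalize c s(y, z) = v; generalize c s(x, z) = w
  revert u v w; decide

lemma base_check : ∀ i : Fin 2, ¬ ∃ a : Fin 14, a ≠ 0 ∧ gtab (0 - a) = i ∧
    ∃ b, b ≠ 0 ∧ b ≠ a ∧ gtab (0 - b) = i ∧ gtab (a - b) = i ∧
    ∃ d, d ≠ 0 ∧ d ≠ a ∧ d ≠ b ∧ gtab (0 - d) = i ∧ gtab (b - d) = i ∧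
    ∃ e, e ≠ 0 ∧ e ≠ a ∧ e ≠ b ∧ e ≠ d ∧ gtab (0 - e) = i ∧ gtab (d - e) = i ∧
      gtab (e - a) = i := by decide

lemma c14_tuple_free : ∀ i : Fin 2, ¬ W5Tuple c14 i := by
  rintro i ⟨h, a, b, d, e, hha, hhb, hhd, hhe, hab, had, hae, hbd, hbe, hde,
    cha, chb, chd, che, cab, cbd, cde, cea⟩
  simp only [c14_pair] at cha chb chd che cab cbd cde cea
  have n0 : ∀ x : Fin 14, h ≠ x → x - h ≠ 0 := fun x hx q => hx (sub_eq_zero.mp q).symm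
  have nd : ∀ x y : Fin 14, x ≠ y → x - h ≠ y - h := fun x y hxy q =>
    hxy (by rwa [sub_left_inj] at q)
  have hub : ∀ x : Fin 14, gtab (h - x) = i → gtab ((0 : Fin 14) - (x - h)) = i := by
    intro x hx
    rw [show (0 : Fin 14) - (x - h) = h - x by abel]
    exact hx
  have rimc : ∀ x y : Fin 14, gtab (x - y) = i → gtab ((x - h) - (y - h)) = i := by
    intro x y hxy
    rwa [show (x - h) - (y - h) = x - y by abel]
  exact base_check i ⟨a - h, n0 a hha, hub a cha, b - h, n0 b hhb, nd b a hab.symm,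
    hub b chb, rimc a b cab, d - h, n0 d hhd, nd d a had.symm, nd d b hbd.symm,
    hub d chd, rimc b d cbd, e - h, n0 e hhe, nd e a hae.symm, nd e b hbe.symm,
    nd e d hde.symm, hub e che, rimc d e cde, rimc e a cea⟩

/-- a type `W` carries a `k`-coloring with no rainbow triangle and no mono `W₅`. -/
def GoodOn (W : Type*) (k : ℕ) : Prop :=
  ∃ c : Sym2 W → Fin k, ¬ HasRainbowTriangle c ∧ ∀ i, ¬ W5Tuple c i

lemma goodOn_of_emb {W W' : Type*} (f : W' ↪ W) {k : ℕ} (h : GoodOn W k) : GoodOn W' k := by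
  obtain ⟨c, hr, hm⟩ := h
  refine ⟨fun s => c (s.map f), ?_, ?_⟩
  · rintro ⟨x, y, z, hxy, hyz, hxz, h1, h2, h3⟩
    simp only [Sym2.map_pair_eq] at h1 h2 h3
    exact hr ⟨f x, f y, f z, fun q => hxy (f.injective q), fun q => hyz (f.injective q),
      fun q => hxz (f.injective q), h1, h2, h3⟩
  · rintro i ⟨h0, a, b, d, e, hha, hhb, hhd, hhe, hab, had, hae, hbd, hbe, hde,
      c1, c2, c3, c4, c5, c6, c7, c8⟩
    simp only [Sym2.map_pair_eq] at c1 c2 c3 c4 c5 c6 c7 c8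
    exact hm i ⟨f h0, f a, f b, f d, f e, fun q => hha (f.injective q),
      fun q => hhb (f.injective q), fun q => hhd (f.injective q), fun q => hhe (f.injective q),
      fun q => hab (f.injective q), fun q => had (f.injective q), fun q => hae (f.injective q),
      fun q => hbd (f.injective q), fun q => hbe (f.injective q), fun q => hde (f.injective q),
      c1, c2, c3, c4, c5, c6, c7, c8⟩

section Subst

variable {n k b m : ℕ}

/-- the blow-up coloring on `Fin b × Fin n`. -/
def prodColor (o : Fin b → Fin b → Fin m) (osymm : ∀ x y, o x y = o y x)
    (c : Sym2 (Fin n) → Fin k) :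
    Sym2 (Fin b × Fin n) → Fin (k + m) :=
  Sym2.lift ⟨fun u v => if u.1 = v.1 then (c s(u.2, v.2)).castLE (Nat.le_add_right k m)
      else ⟨k + (o u.1 v.1).val, by omega⟩,
    by
      intro u v
      dsimp only
      by_cases h : u.1 = v.1
      · rw [if_pos h, if_pos h.symm, Sym2.eq_swap]
      · rw [if_neg h, if_neg (Ne.symm h)]
        simp [osymm u.1 v.1]⟩

lemma prodColor_pair (o : Fin b → Fin b → Fin m) (osymm : ∀ x y, o x y = o y x)
    (c : Sym2 (Fin n) → Fin k) (u v : Fin b × Fin n) :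
    prodColor o osymm c s(u, v) =
      if u.1 = v.1 then (c s(u.2, v.2)).castLE (Nat.le_add_right k m)
      else ⟨k + (o u.1 v.1).val, by omega⟩ := rfl

lemma goodOn_prod (o : Fin b → Fin b → Fin m) (osymm : ∀ x y, o x y = o y x)
    (otf : ∀ x y p : Fin b, x ≠ y → x ≠ p → y ≠ p →
      ¬ (o x p = o x y ∧ o y p = o x y))
    (orb : ∀ x y z : Fin b, ¬ (o x y ≠ o y z ∧ o y z ≠ o x z ∧ o x y ≠ o x z))
    (hg : GoodOn (Fin n) k) : GoodOn (Fin b × Fin n) (k + m) := by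
  obtain ⟨c, hr, hm⟩ := hg
  refine ⟨prodColor o osymm c, ?_, ?_⟩
  · rintro ⟨x, y, z, hxy, hyz, hxz, h1, h2, h3⟩
    simp only [prodColor_pair] at h1 h2 h3
    by_cases e1 : x.1 = y.1 <;> by_cases e2 : y.1 = z.1 <;> by_cases e3 : x.1 = z.1
    · rw [if_pos e1] at h1 h3
      rw [if_pos e2] at h1 h2
      rw [if_pos e3] at h2 h3
      exact hr ⟨x.2, y.2, z.2, fun q => hxy (Prod.ext e1 q), fun q => hyz (Prod.ext e2 q),
        fun q => hxz (Prod.ext e3 q),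
        fun q => h1 (by rw [q]), fun q => h2 (by rw [q]), fun q => h3 (by rw [q])⟩
    · exact e3 (e1.trans e2)
    · exact e2 (e1.symm.trans e3)
    · rw [if_neg e2] at h2
      rw [if_neg e3] at h2
      exact h2 (Fin.ext (by dsimp only; rw [e1]))
    · exact e1 (e3.trans e2.symm)
    · rw [if_neg e1] at h3
      rw [if_neg e3] at h3
      exact h3 (Fin.ext (by dsimp only; rw [e2]))
    · rw [if_neg e1] at h1
      rw [if_neg e2] at h1
      exact h1 (Fin.ext (by dsimp only; rw [e3, osymm]))
    · rw [if_neg e1] at h1 h3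
      rw [if_neg e2] at h1 h2
      rw [if_neg e3] at h2 h3
      exact orb x.1 y.1 z.1 ⟨fun q => h1 (Fin.ext (by dsimp only; rw [q])), fun q => h2 (Fin.ext (by dsimp only; rw [q])),
        fun q => h3 (Fin.ext (by dsimp only; rw [q]))⟩
  · rintro i ⟨T0, T1, T2, T3, T4, hha, hhb, hhd, hhe, hab, had, hae, hbd, hbe, hde,
      cha, chb, chd, che, cab, cbd, cde, cea⟩
    simp only [prodColor_pair] at cha chb chd che cab cbd cde cea
    by_cases hi : i.val < k
    · have keyA : ∀ u v : Fin b × Fin n,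
          (if u.1 = v.1 then (c s(u.2, v.2)).castLE (Nat.le_add_right k m)
            else (⟨k + (o u.1 v.1).val, by omega⟩ : Fin (k + m))) = i →
          u.1 = v.1 ∧ c s(u.2, v.2) = ⟨i.val, hi⟩ := by
        intro u v hc
        by_cases e : u.1 = v.1
        · rw [if_pos e] at hc
          refine ⟨e, Fin.ext ?_⟩
          simpa using congrArg Fin.val hc
        · rw [if_neg e] at hc
          have h1 : k + (o u.1 v.1).val = i.val := congrArg Fin.val hc
          exact absurd h1 (by omega)
      obtain ⟨eha, cha'⟩ := keyA _ _ cha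
      obtain ⟨ehb, chb'⟩ := keyA _ _ chb
      obtain ⟨ehd, chd'⟩ := keyA _ _ chd
      obtain ⟨ehe, che'⟩ := keyA _ _ che
      obtain ⟨-, cab'⟩ := keyA _ _ cab
      obtain ⟨-, cbd'⟩ := keyA _ _ cbd
      obtain ⟨-, cde'⟩ := keyA _ _ cde
      obtain ⟨-, cea'⟩ := keyA _ _ cea
      refine hm ⟨i.val, hi⟩ ⟨T0.2, T1.2, T2.2, T3.2, T4.2,
        ?_, ?_, ?_, ?_, ?_, ?_, ?_, ?_, ?_, ?_,
        cha', chb', chd', che', cab', cbd', cde', cea'⟩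
      · exact fun q => hha (Prod.ext eha q)
      · exact fun q => hhb (Prod.ext ehb q)
      · exact fun q => hhd (Prod.ext ehd q)
      · exact fun q => hhe (Prod.ext ehe q)
      · exact fun q => hab (Prod.ext (eha.symm.trans ehb) q)
      · exact fun q => had (Prod.ext (eha.symm.trans ehd) q)
      · exact fun q => hae (Prod.ext (eha.symm.trans ehe) q)
      · exact fun q => hbd (Prod.ext (ehb.symm.trans ehd) q)
      · exact fun q => hbe (Prod.ext (ehb.symm.trans ehe) q)
      · exact fun q => hde (Prod.ext (ehd.symm.trans ehe) q)
    · have keyB : ∀ u v : Fin b × Fin n,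
          (if u.1 = v.1 then (c s(u.2, v.2)).castLE (Nat.le_add_right k m)
            else (⟨k + (o u.1 v.1).val, by omega⟩ : Fin (k + m))) = i →
          u.1 ≠ v.1 ∧ (o u.1 v.1).val = i.val - k := by
        intro u v hc
        by_cases e : u.1 = v.1
        · rw [if_pos e] at hc
          have h1 : (c s(u.2, v.2)).val = i.val := congrArg Fin.val hc
          have h2 := (c s(u.2, v.2)).isLt
          exact absurd h1 (by omega)
        · rw [if_neg e] at hc
          have h1 : k + (o u.1 v.1).val = i.val := congrArg Fin.val hc
          exact ⟨e, by omega⟩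
      obtain ⟨eha, cha'⟩ := keyB _ _ cha
      obtain ⟨ehb, chb'⟩ := keyB _ _ chb
      obtain ⟨eab, cab'⟩ := keyB _ _ cab
      refine otf T1.1 T2.1 T0.1 eab (fun q => eha q.symm) (fun q => ehb q.symm) ⟨?_, ?_⟩
      · rw [osymm]
        exact Fin.ext (cha'.trans cab'.symm)
      · rw [osymm]
        exact Fin.ext (chb'.trans cab'.symm)



/-- blow-up by 5 with the C5 / C5-bar outer coloring, and by 2 with one new color -/
def o5 : Fin 5 → Fin 5 → Fin 2 := fun x y =>
  if (x - y).val = 1 ∨ (y - x).val = 1 then 0 else 1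

def o2 : Fin 2 → Fin 2 → Fin 1 := fun _ _ => 0

lemma goodOn_step5 (hg : GoodOn (Fin n) k) : GoodOn (Fin 5 × Fin n) (k + 2) :=
  goodOn_prod o5 (by decide) (by decide) (by decide) hg

lemma goodOn_step2 (hg : GoodOn (Fin n) k) : GoodOn (Fin 2 × Fin n) (k + 1) :=
  goodOn_prod o2 (by decide) (by decide) (by decide) hg

end Subst

/-- iterated Ramsey bound -/
def rN (k : ℕ) : ℕ → ℕ
  | 0 => 0
  | m + 1 => k * rN k m + 1

lemma greedy {V : Type*} [DecidableEq V] {k : ℕ} (hk : 0 < k) (c : Sym2 V → Fin k) :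
    ∀ (m : ℕ) (s : Finset V), rN k m ≤ s.card →
    ∃ (xs : Fin m → V) (col : Fin m → Fin k),
      (∀ i, xs i ∈ s) ∧ Function.Injective xs ∧
      ∀ i j : Fin m, i < j → c s(xs i, xs j) = col i := by
  intro m
  induction m with
  | zero =>
    intro s _
    exact ⟨Fin.elim0, Fin.elim0, fun i => i.elim0, fun i => i.elim0, fun i => i.elim0⟩
  | succ m ih =>
    intro s hs
    have h1 : 0 < s.card := lt_of_lt_of_le (by simp [rN]) hs
    obtain ⟨x, hx⟩ := Finset.card_pos.mp h1
    have h2 : k * rN k m ≤ (s.erase x).card := by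
      rw [Finset.card_erase_of_mem hx]
      have : rN k (m + 1) = k * rN k m + 1 := rfl
      omega
    obtain ⟨j, -, hj⟩ := Finset.exists_le_card_fiber_of_mul_le_card_of_maps_to
      (s := s.erase x) (t := Finset.univ) (f := fun y => c s(x, y))
      (fun a _ => Finset.mem_univ _)
      (Finset.univ_nonempty_iff.mpr ⟨⟨0, hk⟩⟩) (by simpa using h2)
    obtain ⟨xs, col, hmem, hinj, hcol⟩ := ih _ hj
    refine ⟨Fin.cons x xs, Fin.cons j col, ?_, ?_, ?_⟩
    · intro i
      refine Fin.cases ?_ ?_ i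
      · exact hx
      · intro i'
        have := hmem i'
        simp only [Fin.cons_succ]
        exact Finset.mem_of_mem_erase (Finset.mem_of_mem_filter _ this)
    · rw [Fin.cons_injective_iff]
      refine ⟨?_, hinj⟩
      rintro ⟨i', hi'⟩
      have := hmem i'
      rw [hi'] at this
      exact Finset.notMem_erase x s (Finset.mem_of_mem_filter _ this)
    · intro i j'
      refine Fin.cases ?_ ?_ j'
      · intro hij
        exact absurd hij (by simp)
      · intro j''
        refine Fin.cases ?_ ?_ i
        · intro _
          simp only [Fin.cons_succ, Fin.cons_zero]
          have := hmem j''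
          simp only [Finset.mem_filter] at this
          exact this.2
        · intro i' hij
          simp only [Fin.cons_succ]
          exact hcol i' j'' (by simpa [Fin.succ_lt_succ_iff] using hij)

lemma ramsey_tuple {k : ℕ} (hk : 0 < k) :
    ∀ c : Sym2 (Fin (rN k (4 * k + 1))) → Fin k, ∃ i, W5Tuple c i := by
  intro c
  obtain ⟨xs, col, -, hinj, hcol⟩ := greedy hk c (4 * k + 1) Finset.univ (by simp)
  -- pigeonhole on the colors of the first 4k indices
  set t : Finset (Fin (4 * k + 1)) := Finset.univ.filter (fun i => i.val < 4 * k) with ht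
  have htcard : t.card = 4 * k := by
    have he : t = Finset.univ.erase (Fin.last (4 * k)) := by
      ext i
      have := i.isLt
      simp only [ht, Finset.mem_filter, Finset.mem_univ, true_and, Finset.mem_erase,
        Fin.ext_iff, Fin.val_last, and_true]
      have h2 : (Fin.last (4 * k)).val = 4 * k := rfl
      omega
    rw [he, Finset.card_erase_of_mem (Finset.mem_univ _)]
    simp
  obtain ⟨j, -, hj⟩ := Finset.exists_le_card_fiber_of_mul_le_card_of_maps_to
    (s := t) (t := Finset.univ) (f := col) (n := 4) (fun a _ => Finset.mem_univ _)
    (Finset.univ_nonempty_iff.mpr ⟨⟨0, hk⟩⟩) (by rw [htcard, Finset.card_univ, Fintype.card_fin, Nat.mul_comm])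
  obtain ⟨u, hu, hucard⟩ := Finset.exists_subset_card_eq hj
  set w : Fin 4 → Fin (4 * k + 1) := fun i => (u.orderIsoOfFin hucard i : Fin (4 * k + 1))
    with hw
  have hwmem : ∀ i, w i ∈ u := fun i => (u.orderIsoOfFin hucard i).2
  have hwinj : Function.Injective w :=
    fun a b hab => (u.orderIsoOfFin hucard).injective (Subtype.ext hab)
  have hwlt : ∀ i, w i < Fin.last (4 * k) := by
    intro i
    have := hu (hwmem i)
    have h2 := (Finset.mem_filter.mp (Finset.mem_filter.mp this).1).2
    exact Fin.lt_def.mpr (by simpa using h2)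
  have hwcol : ∀ i, col (w i) = j := by
    intro i
    have := hu (hwmem i)
    exact (Finset.mem_filter.mp this).2
  -- all pairs among (xs ∘ w) i and xs last are colored j
  have pair1 : ∀ p q : Fin 4, p ≠ q → c s(xs (w p), xs (w q)) = j := by
    intro p q hpq
    rcases lt_or_gt_of_ne hpq with h | h
    · rw [← hwcol p]
      exact hcol _ _ ((u.orderIsoOfFin hucard).strictMono (by exact_mod_cast h))
    · rw [Sym2.eq_swap, ← hwcol q]
      exact hcol _ _ ((u.orderIsoOfFin hucard).strictMono (by exact_mod_cast h))
  have pair2 : ∀ p : Fin 4, c s(xs (w p), xs (Fin.last (4 * k))) = j := by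
    intro p
    rw [← hwcol p]
    exact hcol _ _ (hwlt p)
  have hne : ∀ p : Fin 4, xs (w p) ≠ xs (Fin.last (4 * k)) :=
    fun p q => (hwlt p).ne (hinj q)
  have hne2 : ∀ p q : Fin 4, p ≠ q → xs (w p) ≠ xs (w q) :=
    fun p q hpq h => hpq (hwinj (hinj h))
  refine ⟨j, xs (Fin.last (4 * k)), xs (w 0), xs (w 1), xs (w 2), xs (w 3),
    (hne 0).symm, (hne 1).symm, (hne 2).symm, (hne 3).symm,
    hne2 0 1 (by decide), hne2 0 2 (by decide), hne2 0 3 (by decide),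
    hne2 1 2 (by decide), hne2 1 3 (by decide), hne2 2 3 (by decide),
    by rw [Sym2.eq_swap]; exact pair2 0, by rw [Sym2.eq_swap]; exact pair2 1,
    by rw [Sym2.eq_swap]; exact pair2 2, by rw [Sym2.eq_swap]; exact pair2 3,
    pair1 0 1 (by decide), pair1 1 2 (by decide), pair1 2 3 (by decide),
    pair1 3 0 (by decide)⟩


/-! ### assembling the construction -/

lemma goodOn_14 : GoodOn (Fin 14) 2 := ⟨c14, no_rainbow_two c14, c14_tuple_free⟩

lemma goodOn_even : ∀ j : ℕ, GoodOn (Fin (14 * 5 ^ j)) (2 + 2 * j) := by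
  intro j
  induction j with
  | zero => exact goodOn_of_emb (finCongr (by norm_num)).toEmbedding goodOn_14
  | succ j ih =>
    have h5 : GoodOn (Fin 5 × Fin (14 * 5 ^ j)) ((2 + 2 * j) + 2) := goodOn_step5 ih
    have he : (14 * 5 ^ (j + 1)) = 5 * (14 * 5 ^ j) := by ring
    have hc : 2 + 2 * (j + 1) = (2 + 2 * j) + 2 := by ring
    rw [hc, he]
    exact goodOn_of_emb (finProdFinEquiv.symm.toEmbedding) h5

lemma goodOn_odd : ∀ j : ℕ, GoodOn (Fin (28 * 5 ^ j)) (3 + 2 * j) := by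
  intro j
  induction j with
  | zero =>
    have h2 : GoodOn (Fin 2 × Fin 14) (2 + 1) := goodOn_step2 goodOn_14
    exact goodOn_of_emb ((finCongr (by norm_num)).trans finProdFinEquiv.symm).toEmbedding h2
  | succ j ih =>
    have h5 : GoodOn (Fin 5 × Fin (28 * 5 ^ j)) ((3 + 2 * j) + 2) := goodOn_step5 ih
    have he : (28 * 5 ^ (j + 1)) = 5 * (28 * 5 ^ j) := by ring
    have hc : 3 + 2 * (j + 1) = (3 + 2 * j) + 2 := by ring
    rw [hc, he]
    exact goodOn_of_emb (finProdFinEquiv.symm.toEmbedding) h5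

lemma goodOn_lb {k n : ℕ} (hk : 1 ≤ k) (hg : GoodOn (Fin n) k) :
    n + 1 ≤ gallaiRamseyK3 k (wheelGraph 4) := by
  have hN : ∀ c : Sym2 (Fin (rN k (4 * k + 1))) → Fin k,
      ∃ i, HasMonoCopy c (wheelGraph 4) i :=
    fun c => (ramsey_tuple hk c).imp (fun i => (mono_iff_tuple c i).mpr)
  refine le_csInf ⟨rN k (4 * k + 1), fun c => Or.inr (hN c)⟩ ?_
  intro m hm
  by_contra hlt
  push_neg at hlt
  obtain ⟨c, hr, hmono⟩ := goodOn_of_emb (Fin.castLEEmb (by omega : m ≤ n)) hg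
  rcases hm c with h | ⟨i, h⟩
  · exact hr h
  · exact hmono i ((mono_iff_tuple c i).mp h)


/-- For every integer `k ≥ 2`, `gr_k(K₃ : W₅) ≥ 14·5^{(k−2)/2} + 1` if `k`
is even and `gr_k(K₃ : W₅) ≥ 28·5^{(k−3)/2} + 1` if `k` is odd; that is, there exists a
`k`-coloring of the complete graph on `14·5^{(k−2)/2}` (resp. `28·5^{(k−3)/2}`) vertices
with no rainbow triangle and no monochromatic copy of `W₅`. -/
theorem gallaiRamsey_W5_lower (k : ℕ) (hk : 2 ≤ k) :
    (Even k → 14 * 5 ^ ((k - 2) / 2) + 1 ≤ gallaiRamseyK3 k (wheelGraph 4) ∧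
      ∃ c : Sym2 (Fin (14 * 5 ^ ((k - 2) / 2))) → Fin k,
        ¬ HasRainbowTriangle c ∧ ∀ i, ¬ HasMonoCopy c (wheelGraph 4) i) ∧
    (Odd k → 28 * 5 ^ ((k - 3) / 2) + 1 ≤ gallaiRamseyK3 k (wheelGraph 4) ∧
      ∃ c : Sym2 (Fin (28 * 5 ^ ((k - 3) / 2))) → Fin k,
        ¬ HasRainbowTriangle c ∧ ∀ i, ¬ HasMonoCopy c (wheelGraph 4) i) := by
  constructor
  · intro hke
    have hkm : k % 2 = 0 := Nat.even_iff.mp hke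
    have hg : GoodOn (Fin (14 * 5 ^ ((k - 2) / 2))) k := by
      have hc : 2 + 2 * ((k - 2) / 2) = k := by omega
      have h0 := goodOn_even ((k - 2) / 2)
      rwa [hc] at h0
    refine ⟨goodOn_lb (by omega) hg, ?_⟩
    obtain ⟨c, h1, h2⟩ := hg
    exact ⟨c, h1, fun i hm => h2 i ((mono_iff_tuple c i).mp hm)⟩
  · intro hko
    have hkm : k % 2 = 1 := Nat.odd_iff.mp hko
    have hg : GoodOn (Fin (28 * 5 ^ ((k - 3) / 2))) k := by
      have hc : 3 + 2 * ((k - 3) / 2) = k := by omega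
      have h0 := goodOn_odd ((k - 3) / 2)
      rwa [hc] at h0
    refine ⟨goodOn_lb (by omega) hg, ?_⟩
    obtain ⟨c, h1, h2⟩ := hg
    exact ⟨c, h1, fun i hm => h2 i ((mono_iff_tuple c i).mp hm)⟩
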